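/- Let n > 2σ > 0 and suppose v : ℝ^n → ℝ is nonnegative, measurable, v(0) = 1, and satisfies v(y) = ∫_{ℝ^n} K₀ · v(z)^{(n+2σ)/(n−2σ)} |y−z|^{2σ−n} dz + C₀ for all y ∈ ℝ^n, where K₀ > 0 and C₀ ≥ 0 are constants. Then C₀ = 0. -/

import Mathlib

open MeasureTheory Metric

private lemma measurable_rpow_const_aux (a : ℝ) : Measurable (fun x : ℝ => x ^ a) := by
  measurability

theorem stmt_15 (n : ℕ) (σ : ℝ) (hσ : 0 < σ) (hn : 2 * σ < n)
    (v : EuclideanSpace ℝ (Fin n) → ℝ) (hvm : Measurable v) (hv0 : ∀ y, 0 ≤ v y)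
    (hv1 : v 0 = 1) (K₀ C₀ : ℝ) (hK₀ : 0 < K₀) (hC₀ : 0 ≤ C₀)
    (hint : ∀ y, Integrable (fun z => K₀ * v z ^ (((n : ℝ) + 2 * σ) / ((n : ℝ) - 2 * σ)) *
      ‖y - z‖ ^ (2 * σ - (n : ℝ))))
    (heq : ∀ y, v y = (∫ z, K₀ * v z ^ (((n : ℝ) + 2 * σ) / ((n : ℝ) - 2 * σ)) *
      ‖y - z‖ ^ (2 * σ - (n : ℝ))) + C₀) :
    C₀ = 0 := by
  by_contra hC
  have hC₀' : 0 < C₀ := lt_of_le_of_ne hC₀ (Ne.symm hC)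
  set p : ℝ := ((n : ℝ) + 2 * σ) / ((n : ℝ) - 2 * σ) with hp
  have hnpos : (0 : ℝ) < n := lt_trans (by positivity) hn
  have hppos : 0 < p := div_pos (by linarith) (by linarith)
  -- v ≥ C₀ everywhere
  have hvC : ∀ y, C₀ ≤ v y := by
    intro y
    have hnn : 0 ≤ ∫ z, K₀ * v z ^ p * ‖y - z‖ ^ (2 * σ - (n : ℝ)) := by
      apply integral_nonneg
      intro z
      have := hv0 z
      positivity
    rw [heq y]
    linarith
  set c : ℝ := K₀ * C₀ ^ p with hc
  have hcpos : 0 < c := by positivity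
  set e : ℝ := 2 * σ - (n : ℝ) with he
  have hepos : e ≤ 0 := by simp [he]; linarith
  -- the function c * ‖z‖ ^ e is integrable
  set f : EuclideanSpace ℝ (Fin n) → ℝ := fun z => c * ‖z‖ ^ e with hf
  have hfmeas : Measurable f := ((measurable_rpow_const_aux e).comp measurable_norm).const_mul c
  have hfnonneg : ∀ z, 0 ≤ f z := by
    intro z
    have : (0:ℝ) ≤ ‖z‖ ^ e := Real.rpow_nonneg (norm_nonneg _) _
    positivity
  have hfint : Integrable f := by
    refine Integrable.mono' (hint 0) hfmeas.aestronglyMeasurable ?_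
    filter_upwards with z
    rw [Real.norm_of_nonneg (hfnonneg z)]
    have h1 : C₀ ^ p ≤ v z ^ p := Real.rpow_le_rpow hC₀ (hvC z) hppos.le
    have h2 : ‖(0 : EuclideanSpace ℝ (Fin n)) - z‖ = ‖z‖ := by simp
    rw [h2]
    have h3 : (0:ℝ) ≤ ‖z‖ ^ e := Real.rpow_nonneg (norm_nonneg _) _
    calc c * ‖z‖ ^ e = K₀ * C₀ ^ p * ‖z‖ ^ e := rfl
      _ ≤ K₀ * v z ^ p * ‖z‖ ^ e := by
          apply mul_le_mul_of_nonneg_right _ h3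
          exact mul_le_mul_of_nonneg_left h1 hK₀.le
  set M : ℝ := ∫ z, f z with hM
  have hMnn : 0 ≤ M := integral_nonneg hfnonneg
  -- volume of unit ball
  set vb : ℝ := (volume (ball (0 : EuclideanSpace ℝ (Fin n)) 1)).toReal with hvb
  have hvbpos : 0 < vb := by
    apply ENNReal.toReal_pos
    · exact (measure_ball_pos volume 0 one_pos).ne'
    · exact measure_ball_lt_top.ne
  -- choose a large radius R
  set B : ℝ := 2 * (M + 1) / (c * vb) with hB
  have hBpos : 0 < B := by positivity
  set R : ℝ := max 2 (B ^ (1 / (2 * σ))) with hR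
  have hR2 : (2 : ℝ) ≤ R := le_max_left _ _
  have hR1 : (1 : ℝ) ≤ R := by linarith
  have hR0 : (0 : ℝ) < R := by linarith
  have hRB : B ≤ R ^ (2 * σ) := by
    have h1 : B ^ (1 / (2 * σ)) ≤ R := le_max_right _ _
    have h2 : (B ^ (1 / (2 * σ))) ^ (2 * σ) ≤ R ^ (2 * σ) :=
      Real.rpow_le_rpow (Real.rpow_nonneg hBpos.le _) h1 (by positivity)
    rwa [← Real.rpow_mul hBpos.le, one_div_mul_cancel (by positivity), Real.rpow_one] at h2
  -- the annulus
  set A : Set (EuclideanSpace ℝ (Fin n)) :=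
    closedBall (0 : EuclideanSpace ℝ (Fin n)) R \ ball 0 1 with hA
  have hAmeas : MeasurableSet A := measurableSet_closedBall.diff measurableSet_ball
  have hsub : ball (0 : EuclideanSpace ℝ (Fin n)) 1 ⊆ closedBall 0 R :=
    ball_subset_closedBall.trans (closedBall_subset_closedBall hR1)
  have hvolcb : volume (closedBall (0 : EuclideanSpace ℝ (Fin n)) R)
      = ENNReal.ofReal (R ^ n) * volume (ball (0 : EuclideanSpace ℝ (Fin n)) 1) := by
    rw [Measure.addHaar_closedBall volume 0 hR0.le, finrank_euclideanSpace_fin]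
  have hvolA : volume A = ENNReal.ofReal (R ^ n) * volume (ball (0 : EuclideanSpace ℝ (Fin n)) 1)
      - volume (ball (0 : EuclideanSpace ℝ (Fin n)) 1) := by
    rw [hA, measure_diff hsub measurableSet_ball.nullMeasurableSet measure_ball_lt_top.ne, hvolcb]
  have hAfin : volume A ≠ ⊤ := by
    rw [hvolA]
    exact (tsub_le_self.trans_lt (ENNReal.mul_lt_top ENNReal.ofReal_lt_top
      measure_ball_lt_top)).ne
  have hvolAtoReal : (volume A).toReal = R ^ n * vb - vb := by
    rw [hvolA, ENNReal.toReal_sub_of_le (le_mul_of_one_le_left zero_le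
      (by simpa using ENNReal.one_le_ofReal.2 (one_le_pow₀ hR1 : (1:ℝ) ≤ R ^ n))) (ENNReal.mul_lt_top
      ENNReal.ofReal_lt_top measure_ball_lt_top).ne, ENNReal.toReal_mul,
      ENNReal.toReal_ofReal (by positivity)]
  -- lower bound on the set integral
  have hlow : c * R ^ e * (volume A).toReal ≤ ∫ z in A, f z := by
    apply setIntegral_ge_of_const_le_real hAmeas hAfin
    · intro x hx
      obtain ⟨hx1, hx2⟩ := hx
      simp only [mem_closedBall, mem_ball, not_lt, dist_zero_right] at hx1 hx2
      have hxn : (0:ℝ) < ‖x‖ := lt_of_lt_of_le one_pos hx2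
      have : R ^ e ≤ ‖x‖ ^ e := Real.rpow_le_rpow_of_nonpos hxn hx1 hepos
      exact mul_le_mul_of_nonneg_left this hcpos.le
    · exact hfint.integrableOn
  have hup : ∫ z in A, f z ≤ M :=
    setIntegral_le_integral hfint (Filter.Eventually.of_forall hfnonneg)
  -- R^e * R^n = R^(2σ)
  have hRe : R ^ e * R ^ n = R ^ (2 * σ) := by
    rw [← Real.rpow_natCast R n, ← Real.rpow_add hR0]
    congr 1
    rw [he]; ring
  -- R^n ≥ 2
  have hRn2 : (2 : ℝ) ≤ R ^ n := by
    calc (2:ℝ) ≤ 2 ^ n := by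
          apply le_self_pow₀ (by norm_num)
          have : 0 < n := by exact_mod_cast hnpos
          omega
      _ ≤ R ^ n := by
          apply pow_le_pow_left₀ (by norm_num) hR2
  have hRepos : 0 < R ^ e := Real.rpow_pos_of_pos hR0 _
  -- combine
  have key : M + 1 ≤ M := by
    have h1 : c * R ^ e * (R ^ n * vb - vb) ≤ M := by
      rw [← hvolAtoReal]; exact hlow.trans hup
    have h2 : c * R ^ e * (R ^ n / 2 * vb) ≤ c * R ^ e * (R ^ n * vb - vb) := by
      apply mul_le_mul_of_nonneg_left _ (by positivity)
      nlinarith [hvbpos, hRn2]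
    have h3 : c * R ^ e * (R ^ n / 2 * vb) = c * vb / 2 * (R ^ e * R ^ n) := by ring
    rw [h3, hRe] at h2
    have h4 : c * vb / 2 * B ≤ c * vb / 2 * R ^ (2 * σ) :=
      mul_le_mul_of_nonneg_left hRB (by positivity)
    have h5 : c * vb / 2 * B = M + 1 := by
      rw [hB]; field_simp
    linarith
  linarith
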